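/- The q-deformed Witt algebra with basis {d_n : n ∈ ℤ} and bracket ⟨d_n, d_m⟩ = ({n}_q − {m}_q) d_{n+m} is a hom-Lie algebra with twisting map α(d_n) = qⁿ d_n: the bracket is skew-symmetric and satisfies the cyclic sum over (x,y,z) of ⟨(id + α)(x), ⟨y,z⟩⟩ = 0. -/

import Mathlib

noncomputable section

variable (k : Type*) [Field k]

/-- The q-integer `{n}_q = (qⁿ − 1)/(q − 1)` for `n : ℤ`. -/
def qint (q : k) (n : ℤ) : k := (q ^ n - 1) / (q - 1)

/-- The basis vector `d_n` of the free `k`-module `⊕_{n ∈ ℤ} k·d_n`. -/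
def dgen (n : ℤ) : ℤ →₀ k := Finsupp.single n 1

lemma single_eq_smul_dgen (a : ℤ) (b : k) :
    (Finsupp.single a b : ℤ →₀ k) = b • dgen k a := by
  rw [dgen, Finsupp.smul_single', mul_one]

lemma coeff_cyclic (q : k) (hq0 : q ≠ 0) (hq1 : q ≠ 1) (n m l : ℤ) :
    (1 + q ^ n) * ((qint k q m - qint k q l) * (qint k q n - qint k q (m + l)))
    + (1 + q ^ m) * ((qint k q l - qint k q n) * (qint k q m - qint k q (l + n)))
    + (1 + q ^ l) * ((qint k q n - qint k q m) * (qint k q l - qint k q (n + m))) = 0 := by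
  have h1 : q - 1 ≠ 0 := sub_ne_zero.mpr hq1
  simp only [qint, zpow_add₀ hq0]
  field_simp
  ring

lemma basis_cyclic (q : k) (hq0 : q ≠ 0) (hq1 : q ≠ 1)
    (br : (ℤ →₀ k) →ₗ[k] (ℤ →₀ k) →ₗ[k] (ℤ →₀ k))
    (hbr : ∀ n m : ℤ, br (dgen k n) (dgen k m) =
      (qint k q n - qint k q m) • dgen k (n + m))
    (α : (ℤ →₀ k) →ₗ[k] (ℤ →₀ k))
    (hα : ∀ n : ℤ, α (dgen k n) = (q ^ n) • dgen k n) (n m l : ℤ) :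
    br (dgen k n + α (dgen k n)) (br (dgen k m) (dgen k l))
    + br (dgen k m + α (dgen k m)) (br (dgen k l) (dgen k n))
    + br (dgen k l + α (dgen k l)) (br (dgen k n) (dgen k m)) = 0 := by
  have e1 : dgen k n + α (dgen k n) = (1 + q ^ n) • dgen k n := by
    rw [hα, add_smul, one_smul]
  have e2 : dgen k m + α (dgen k m) = (1 + q ^ m) • dgen k m := by
    rw [hα, add_smul, one_smul]
  have e3 : dgen k l + α (dgen k l) = (1 + q ^ l) • dgen k l := by
    rw [hα, add_smul, one_smul]
  rw [e1, e2, e3, hbr m l, hbr l n, hbr n m, map_smul, map_smul, map_smul,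
    map_smul, map_smul, map_smul, LinearMap.smul_apply, LinearMap.smul_apply,
    LinearMap.smul_apply, hbr, hbr, hbr, smul_smul, smul_smul, smul_smul]
  have i1 : m + (l + n) = n + (m + l) := by ring
  have i2 : l + (n + m) = n + (m + l) := by ring
  rw [i1, i2]
  match_scalars
  linear_combination coeff_cyclic k q hq0 hq1 n m l

/-- The q-deformed Witt algebra with basis `{d_n}` and bracket
`⟨d_n, d_m⟩ = ({n}_q − {m}_q)d_{n+m}` is a hom-Lie algebra with twisting map
`α(d_n) = qⁿ d_n`: the bracket is skew-symmetric and the cyclic sum of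
`⟨(id + α)(x), ⟨y,z⟩⟩` vanishes. -/
theorem stmt10 [CharZero k] (q : k) (hq0 : q ≠ 0) (hq1 : q ≠ 1)
    (br : (ℤ →₀ k) →ₗ[k] (ℤ →₀ k) →ₗ[k] (ℤ →₀ k))
    (hbr : ∀ n m : ℤ, br (dgen k n) (dgen k m) =
      (qint k q n - qint k q m) • dgen k (n + m))
    (α : (ℤ →₀ k) →ₗ[k] (ℤ →₀ k))
    (hα : ∀ n : ℤ, α (dgen k n) = (q ^ n) • dgen k n) :
    (∀ x y : ℤ →₀ k, br x y = -br y x) ∧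
    (∀ x y z : ℤ →₀ k,
      br (x + α x) (br y z) + br (y + α y) (br z x) + br (z + α z) (br x y) = 0) := by
  constructor
  · intro x y
    induction x using Finsupp.induction_linear with
    | zero => simp
    | add f g hf hg => simp only [map_add, LinearMap.add_apply, hf, hg]; abel
    | single a b =>
      induction y using Finsupp.induction_linear with
      | zero => simp
      | add f g hf hg => simp only [map_add, LinearMap.add_apply, hf, hg]; abel
      | single c d =>
        rw [single_eq_smul_dgen k a b, single_eq_smul_dgen k c d]
        simp only [map_smul, LinearMap.smul_apply, hbr]
        rw [add_comm c a]
        match_scalars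
        ring
  · intro x y z
    induction x using Finsupp.induction_linear with
    | zero => simp
    | add f g hf hg =>
      have : f + g + α (f + g) = (f + α f) + (g + α g) := by rw [map_add]; abel
      rw [this, map_add, LinearMap.add_apply]
      simp only [map_add, LinearMap.add_apply, LinearMap.map_add] at hf hg ⊢
      linear_combination (norm := abel) hf + hg
    | single a b =>
      induction y using Finsupp.induction_linear with
      | zero => simp
      | add f g hf hg =>
        have : f + g + α (f + g) = (f + α f) + (g + α g) := by rw [map_add]; abel
        rw [this, map_add, LinearMap.add_apply]
        simp only [map_add, LinearMap.add_apply, LinearMap.map_add] at hf hg ⊢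
        linear_combination (norm := abel) hf + hg
      | single c d =>
        induction z using Finsupp.induction_linear with
        | zero => simp
        | add f g hf hg =>
          have : f + g + α (f + g) = (f + α f) + (g + α g) := by rw [map_add]; abel
          rw [this, map_add, LinearMap.add_apply]
          simp only [map_add, LinearMap.add_apply, LinearMap.map_add] at hf hg ⊢
          linear_combination (norm := abel) hf + hg
        | single e r =>
          have key := basis_cyclic k q hq0 hq1 br hbr α hα a c e
          rw [single_eq_smul_dgen k a b, single_eq_smul_dgen k c d,
            single_eq_smul_dgen k e r]
          simp only [map_smul]
          rw [← smul_add b, ← smul_add d, ← smul_add r]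
          simp only [map_smul, LinearMap.smul_apply, smul_smul]
          rw [show r * (d * b) = b * (d * r) by ring, show b * (r * d) = b * (d * r) by ring,
            show d * (b * r) = b * (d * r) by ring, ← smul_add, ← smul_add, key, smul_zero]

end
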